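/- Let m > 0 and q ∈ ℝ with 0 < q² ≤ m². Consider the cubic Q with r_* = r_⊛, for which α₃ = r_⊛ is a root, and let ᾱ₁ < ᾱ₂ be its other two real roots. Then r_⊛ ≤ √((r_⊛ − ᾱ₁)(r_⊛ − ᾱ₂)), i.e. the exponent η = r_⊛/√((r_⊛ − ᾱ₁)(r_⊛ − ᾱ₂)) satisfies η ≤ 1, with equality if and only if q² = m². -/

import Mathlib

/-- The metric function `D(r) = 1 - 2m/r + q²/r²` of the Reissner–Nordström spacetime. -/
noncomputable def D (m q r : ℝ) : ℝ := 1 - 2*m/r + q^2/r^2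

/-- The critical radius `r_⊛ = (5m + √(25m² - 24q²))/4`. -/
noncomputable def rcirc (m q : ℝ) : ℝ := (5*m + Real.sqrt (25*m^2 - 24*q^2))/4

/-- The constant `β = 2√(D(r_*))/r_*` associated to the conformal curve starting at `r_*`. -/
noncomputable def betaConst (m q rs : ℝ) : ℝ := 2 * Real.sqrt (D m q rs) / rs

/-- The coefficient `η = (D_* - 1)/β²` of the cubic `Q`. -/
noncomputable def etaCoeff (m q rs : ℝ) : ℝ := (D m q rs - 1) / (betaConst m q rs)^2

/-- The coefficient `ξ = q²/(r_*·β²)` of the cubic `Q`. -/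
noncomputable def xiCoeff (m q rs : ℝ) : ℝ := q^2 / (rs * (betaConst m q rs)^2)

/-- The cubic `Q(x) = x³ + ηx + ξ`. -/
noncomputable def Qcubic (m q rs x : ℝ) : ℝ := x^3 + etaCoeff m q rs * x + xiCoeff m q rs

set_option maxHeartbeats 1000000 in
/-- For the cubic `Q` with `r_* = r_⊛` (for which `r_⊛` is a root) and `ᾱ₁ < ᾱ₂` its other
two real roots, one has `r_⊛ ≤ √((r_⊛ - ᾱ₁)(r_⊛ - ᾱ₂))`, i.e. the exponent
`η = r_⊛/√((r_⊛ - ᾱ₁)(r_⊛ - ᾱ₂))` satisfies `η ≤ 1`, with equality iff `q² = m²`. -/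
theorem exponent_at_critical_radius (m q a b : ℝ) (hm : 0 < m) (hq0 : 0 < q^2)
    (hq : q^2 ≤ m^2) (hab : a < b)
    (ha : Qcubic m q (rcirc m q) a = 0) (hb : Qcubic m q (rcirc m q) b = 0)
    (ha' : a ≠ rcirc m q) (hb' : b ≠ rcirc m q) :
    Qcubic m q (rcirc m q) (rcirc m q) = 0
    ∧ rcirc m q ≤ Real.sqrt ((rcirc m q - a) * (rcirc m q - b))
    ∧ rcirc m q / Real.sqrt ((rcirc m q - a) * (rcirc m q - b)) ≤ 1
    ∧ (rcirc m q = Real.sqrt ((rcirc m q - a) * (rcirc m q - b)) ↔ q^2 = m^2) := by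
  set r := rcirc m q with hrdef
  have hs2 : Real.sqrt (25*m^2 - 24*q^2) ^ 2 = 25*m^2 - 24*q^2 :=
    Real.sq_sqrt (by nlinarith)
  have hsm : m ≤ Real.sqrt (25*m^2 - 24*q^2) := by
    nlinarith [Real.sqrt_nonneg (25*m^2 - 24*q^2)]
  have hr32 : 3*m/2 ≤ r := by rw [hrdef]; unfold rcirc; linarith
  have hr0 : 0 < r := by linarith
  have hquad : 2*r^2 - 5*m*r + 3*q^2 = 0 := by
    rw [hrdef]; unfold rcirc; linear_combination hs2/8
  have hc : 0 < m*r - q^2 := by nlinarith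
  clear_value r
  have hD : D m q r = (m*r - q^2)/(2*r^2) := by
    unfold D; field_simp; linear_combination hquad
  have hD0 : 0 < D m q r := by rw [hD]; positivity
  have hB : (betaConst m q r)^2 = 2*(m*r - q^2)/r^4 := by
    unfold betaConst
    rw [div_pow, mul_pow, Real.sq_sqrt hD0.le, hD]
    field_simp
  have hB0 : 0 < (betaConst m q r)^2 := by rw [hB]; positivity
  have hEta : etaCoeff m q r = r^2*(q^2 - 2*m*r)/(2*(m*r - q^2)) := by
    unfold etaCoeff
    rw [hB, hD]
    field_simp
    linear_combination (-1)*hquad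
  have hXi : xiCoeff m q r = q^2*r^3/(2*(m*r - q^2)) := by
    unfold xiCoeff
    rw [hB]
    field_simp
  have hQr : Qcubic m q r r = 0 := by
    have : r*m - q^2 ≠ 0 := by linarith
    unfold Qcubic; rw [hEta, hXi]; field_simp; ring
  unfold Qcubic at ha hb
  have keyA : (a - r) * (a^2 + a*r + r^2 + etaCoeff m q r) = 0 := by
    unfold Qcubic at hQr; linear_combination ha - hQr
  have hA : a^2 + a*r + r^2 + etaCoeff m q r = 0 :=
    (mul_eq_zero.mp keyA).resolve_left (sub_ne_zero.mpr ha')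
  have keyB : (b - r) * (b^2 + b*r + r^2 + etaCoeff m q r) = 0 := by
    unfold Qcubic at hQr; linear_combination hb - hQr
  have hBroot : b^2 + b*r + r^2 + etaCoeff m q r = 0 :=
    (mul_eq_zero.mp keyB).resolve_left (sub_ne_zero.mpr hb')
  have hsum : a + b + r = 0 := by
    have key : (a - b) * (a + b + r) = 0 := by linear_combination hA - hBroot
    exact (mul_eq_zero.mp key).resolve_left (sub_ne_zero.mpr hab.ne)
  have hab2 : a*b = r^2 + etaCoeff m q r := by linear_combination a*hsum - hA
  have hP : (r - a)*(r - b) = r^2*(4*m*r - 5*q^2)/(2*(m*r - q^2)) := by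
    have h1 : (r - a)*(r - b) = 3*r^2 + etaCoeff m q r := by
      linear_combination hab2 - r*hsum
    have : r*m - q^2 ≠ 0 := by linarith
    rw [h1, hEta]; field_simp; ring
  have h2mr : 3*q^2 ≤ 2*m*r := by nlinarith
  have hge : r^2 ≤ (r - a)*(r - b) := by
    rw [hP, le_div_iff₀ (by positivity)]
    nlinarith [mul_nonneg (sq_nonneg r) (show (0:ℝ) ≤ 2*m*r - 3*q^2 by linarith)]
  have hP0 : 0 < (r - a)*(r - b) := lt_of_lt_of_le (by positivity) hge
  have hle : r ≤ Real.sqrt ((r - a)*(r - b)) := by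
    have := Real.sqrt_le_sqrt hge
    rwa [Real.sqrt_sq hr0.le] at this
  refine ⟨hQr, hle, ?_, ?_⟩
  · rw [div_le_one (Real.sqrt_pos.mpr hP0)]; exact hle
  · constructor
    · intro h
      have h2 : r^2 = (r - a)*(r - b) := by
        conv_lhs => rw [h]
        exact Real.sq_sqrt hP0.le
      rw [hP, eq_div_iff (ne_of_gt (by linarith : (0:ℝ) < 2*(m*r - q^2)))] at h2
      have h4 : r^2 * (2*m*r - 3*q^2) = 0 := by linear_combination -h2
      have h3 : 2*m*r = 3*q^2 := by
        have := (mul_eq_zero.mp h4).resolve_left (pow_ne_zero 2 hr0.ne')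
        linarith
      have : m^2 ≤ q^2 := by nlinarith
      linarith
    · intro h
      have hs : Real.sqrt (25*m^2 - 24*q^2) = m := by
        rw [show 25*m^2 - 24*q^2 = m^2 by linarith]
        exact Real.sqrt_sq hm.le
      have hrval : r = 3*m/2 := by rw [hrdef]; unfold rcirc; rw [hs]; ring
      have heq : (r - a)*(r - b) = r^2 := by
        rw [hP, hrval, h,
          div_eq_iff (ne_of_gt (by nlinarith : (0:ℝ) < 2*(m*(3*m/2) - m^2)))]
        ring
      rw [heq, Real.sqrt_sq hr0.le]
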